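/- arXiv:1305.3240 — 6 statements merged into one kernel-verified Lean document; each statement's English description precedes it below -/
import Mathlib

section
/- For every vector γ ∈ ℝ^c one has γᵀ B K Bᵀ Exp(γ) = 0 if and only if Bᵀ γ = 0. -/
open Matrix Real

lemma exp_term_nonneg (x y : ℝ) : 0 ≤ (x - y) * (Real.exp x - Real.exp y) := by
  rcases le_total x y with h | h
  · nlinarith [Real.exp_le_exp.2 h]
  · nlinarith [Real.exp_le_exp.2 h]

lemma exp_term_eq_zero_iff (x y : ℝ) :
    (x - y) * (Real.exp x - Real.exp y) = 0 ↔ x = y := by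
  constructor
  · intro h
    rcases mul_eq_zero.1 h with h' | h'
    · linarith
    · exact Real.exp_injective (by linarith)
  · intro h; simp [h]

/-- For every `γ ∈ ℝ^c`, `γᵀ B K Bᵀ Exp(γ) = 0` if and only if `Bᵀ γ = 0`. -/
theorem stmt_1 (c r : ℕ) (hc : 0 < c) (hr : 0 < r)
    (hd tl : Fin r → Fin c) (hht : ∀ j, hd j ≠ tl j)
    (B : Matrix (Fin c) (Fin r) ℝ)
    (hB : ∀ i j, B i j = if i = hd j then 1 else if i = tl j then -1 else 0)
    (κ : Fin r → ℝ) (hκ : ∀ j, 0 < κ j)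
    (γ : Fin c → ℝ) :
    γ ⬝ᵥ (B * Matrix.diagonal κ * Bᵀ).mulVec (fun i => Real.exp (γ i)) = 0 ↔
      Bᵀ.mulVec γ = 0 := by
  have key : ∀ x : Fin c → ℝ, Bᵀ.mulVec x = fun j => x (hd j) - x (tl j) := by
    intro x; funext j
    have hterm : ∀ i, Bᵀ j i * x i =
        (if i = hd j then x i else 0) - (if i = tl j then x i else 0) := by
      intro i
      by_cases h1 : i = hd j
      · by_cases h2 : i = tl j
        · exact absurd (h1.symm.trans h2) (hht j)
        · simp [Matrix.transpose_apply, hB, h1, h2, hht j]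
      · by_cases h2 : i = tl j
        · simp [Matrix.transpose_apply, hB, h1, h2, Ne.symm (hht j)]
        · simp [Matrix.transpose_apply, hB, h1, h2]
    simp only [Matrix.mulVec, dotProduct]
    rw [Finset.sum_congr rfl (fun i _ => hterm i), Finset.sum_sub_distrib]
    simp
  have hexpr : γ ⬝ᵥ (B * Matrix.diagonal κ * Bᵀ).mulVec (fun i => Real.exp (γ i))
      = ∑ j, κ j * ((γ (hd j) - γ (tl j)) *
          (Real.exp (γ (hd j)) - Real.exp (γ (tl j)))) := by
    rw [Matrix.mul_assoc, ← Matrix.mulVec_mulVec, Matrix.dotProduct_mulVec,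
      ← Matrix.mulVec_transpose, key, ← Matrix.mulVec_mulVec, key]
    simp only [dotProduct]
    refine Finset.sum_congr rfl fun j _ => ?_
    rw [Matrix.mulVec_diagonal]
    ring
  rw [hexpr]
  have hnn : ∀ j ∈ Finset.univ, 0 ≤ κ j * ((γ (hd j) - γ (tl j)) *
      (Real.exp (γ (hd j)) - Real.exp (γ (tl j)))) := fun j _ =>
    mul_nonneg (hκ j).le (exp_term_nonneg _ _)
  rw [Finset.sum_eq_zero_iff_of_nonneg hnn, key]
  constructor
  · intro h; funext j
    have := h j (Finset.mem_univ j)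
    rcases mul_eq_zero.1 this with h' | h'
    · exact absurd h' (hκ j).ne'
    · have := (exp_term_eq_zero_iff _ _).1 h'
      simp [this]
  · intro h j _
    have := congrFun h j
    simp only [Pi.zero_apply] at this
    have hxy : γ (hd j) = γ (tl j) := by linarith
    simp [hxy]
end

section
/- (Proposition 1) A componentwise positive vector x** ∈ ℝ^m is a thermodynamic equilibrium, i.e., satisfies Bᵀ Exp(Zᵀ Ln(x**/x*)) = 0, if and only if Sᵀ Ln(x**) = Sᵀ Ln(x*). In other words, the set of all thermodynamic equilibria is E = { x** ∈ ℝ^m_+ : Sᵀ Ln(x**) = Sᵀ Ln(x*) }. -/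
open Matrix Real

/-- Proposition 1: A componentwise positive `x** ∈ ℝ^m` satisfies
`Bᵀ Exp(Zᵀ Ln(x**/x*)) = 0` if and only if `Sᵀ Ln(x**) = Sᵀ Ln(x*)`, where `S = Z B`. -/
theorem stmt_3 (m c r : ℕ) (hm : 0 < m) (hc : 0 < c) (hr : 0 < r)
    (hd tl : Fin r → Fin c) (hht : ∀ j, hd j ≠ tl j)
    (B : Matrix (Fin c) (Fin r) ℝ)
    (hB : ∀ i j, B i j = if i = hd j then 1 else if i = tl j then -1 else 0)
    (Z : Matrix (Fin m) (Fin c) ℝ)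
    (xs : Fin m → ℝ) (hxs : ∀ i, 0 < xs i)
    (xss : Fin m → ℝ) (hxss : ∀ i, 0 < xss i) :
    Bᵀ.mulVec (fun ρ => Real.exp (Zᵀ.mulVec (fun i => Real.log (xss i / xs i)) ρ)) = 0 ↔
      (Z * B)ᵀ.mulVec (fun i => Real.log (xss i)) =
        (Z * B)ᵀ.mulVec (fun i => Real.log (xs i)) := by
  have key : ∀ (v : Fin c → ℝ) (j : Fin r),
      Bᵀ.mulVec v j = v (hd j) - v (tl j) := by
    intro v j
    have h0 : Bᵀ.mulVec v j = ∑ i, B i j * v i := by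
      simp [Matrix.mulVec, dotProduct, Matrix.transpose_apply]
    rw [h0]
    have hsplit : ∀ i : Fin c, B i j * v i =
        (if i = hd j then v i else 0) + (if i = tl j then -v i else 0) := by
      intro i
      rw [hB]
      by_cases h1 : i = hd j
      · subst h1; simp [hht j]
      · by_cases h2 : i = tl j
        · subst h2; simp [h1]
        · simp [h1, h2]
    rw [Finset.sum_congr rfl (fun i _ => hsplit i), Finset.sum_add_distrib]
    simp [sub_eq_add_neg]
  have hw : (fun i => Real.log (xss i / xs i)) =
      (fun i => Real.log (xss i)) - (fun i => Real.log (xs i)) := by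
    funext i
    simp [Real.log_div (ne_of_gt (hxss i)) (ne_of_gt (hxs i))]
  have hlin : Zᵀ.mulVec (fun i => Real.log (xss i / xs i)) =
      Zᵀ.mulVec (fun i => Real.log (xss i)) - Zᵀ.mulVec (fun i => Real.log (xs i)) := by
    rw [hw, Matrix.mulVec_sub]
  have hZB : ∀ (v : Fin m → ℝ), (Z * B)ᵀ.mulVec v = Bᵀ.mulVec (Zᵀ.mulVec v) := by
    intro v
    rw [Matrix.transpose_mul, ← Matrix.mulVec_mulVec]
  constructor
  · intro h
    funext j
    rw [hZB, hZB, key, key]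
    have hj := congrFun h j
    rw [key] at hj
    simp only [Pi.zero_apply, sub_eq_zero] at hj
    have h2 := Real.exp_injective hj
    rw [hlin] at h2
    simp only [Pi.sub_apply] at h2
    linarith [h2]
  · intro h
    funext j
    rw [key]
    have hj := congrFun h j
    rw [hZB, hZB, key, key] at hj
    have h2 : Zᵀ.mulVec (fun i => Real.log (xss i / xs i)) (hd j) =
        Zᵀ.mulVec (fun i => Real.log (xss i / xs i)) (tl j) := by
      rw [hlin]; simp only [Pi.sub_apply]
      linarith [hj]
    rw [h2]
    simp
end

section
/- Every equilibrium of a balanced reaction network is a thermodynamic equilibrium: if x̄ ∈ ℝ^m is componentwise positive and f(x̄) = −Z B K Bᵀ Exp(Zᵀ Ln(x̄/x*)) = 0, then Bᵀ Exp(Zᵀ Ln(x̄/x*)) = 0, and hence Sᵀ Ln(x̄) = Sᵀ Ln(x*). -/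
open Matrix Real

lemma incidence_mulVec {c r : ℕ} (hd tl : Fin r → Fin c) (hht : ∀ j, hd j ≠ tl j)
    (B : Matrix (Fin c) (Fin r) ℝ)
    (hB : ∀ i j, B i j = if i = hd j then 1 else if i = tl j then -1 else 0)
    (v : Fin c → ℝ) (j : Fin r) :
    Bᵀ.mulVec v j = v (hd j) - v (tl j) := by
  have : ∀ i : Fin c, Bᵀ j i * v i =
      (if i = hd j then v i else 0) + (if i = tl j then -v i else 0) := by
    intro i
    simp only [Matrix.transpose_apply, hB]
    by_cases h1 : i = hd j
    · subst h1
      have hne : ¬ hd j = tl j := hht j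
      simp [hne]
    · by_cases h2 : i = tl j
      · subst h2
        have hne : ¬ tl j = hd j := fun h => hht j h.symm
        simp [h1, hne]
      · simp [h1, h2]
  simp only [Matrix.mulVec, dotProduct, this, Finset.sum_add_distrib,
    Finset.sum_ite_eq', Finset.mem_univ, if_true]
  ring

/-- If `x̄ > 0` and `f(x̄) = −Z B K Bᵀ Exp(Zᵀ Ln(x̄/x*)) = 0`, then
`Bᵀ Exp(Zᵀ Ln(x̄/x*)) = 0` and hence `Sᵀ Ln(x̄) = Sᵀ Ln(x*)`, where `S = Z B`. -/
theorem stmt_4 (m c r : ℕ) (hm : 0 < m) (hc : 0 < c) (hr : 0 < r)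
    (hd tl : Fin r → Fin c) (hht : ∀ j, hd j ≠ tl j)
    (B : Matrix (Fin c) (Fin r) ℝ)
    (hB : ∀ i j, B i j = if i = hd j then 1 else if i = tl j then -1 else 0)
    (κ : Fin r → ℝ) (hκ : ∀ j, 0 < κ j)
    (Z : Matrix (Fin m) (Fin c) ℝ)
    (xs : Fin m → ℝ) (hxs : ∀ i, 0 < xs i)
    (xbar : Fin m → ℝ) (hxbar : ∀ i, 0 < xbar i)
    (heq : -(Z * B * Matrix.diagonal κ * Bᵀ).mulVec
        (fun ρ => Real.exp (Zᵀ.mulVec (fun i => Real.log (xbar i / xs i)) ρ)) = 0) :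
    Bᵀ.mulVec (fun ρ => Real.exp (Zᵀ.mulVec (fun i => Real.log (xbar i / xs i)) ρ)) = 0 ∧
      (Z * B)ᵀ.mulVec (fun i => Real.log (xbar i)) =
        (Z * B)ᵀ.mulVec (fun i => Real.log (xs i)) := by
  set L : Fin m → ℝ := fun i => Real.log (xbar i / xs i) with hL
  set γ : Fin c → ℝ := Zᵀ.mulVec L with hγ
  set μ : Fin c → ℝ := fun ρ => Real.exp (γ ρ) with hμ
  rw [neg_eq_zero] at heq
  -- dot with L
  have hdot : L ⬝ᵥ (Z * B * Matrix.diagonal κ * Bᵀ).mulVec μ = 0 := by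
    rw [heq]; simp
  have key : ∑ j, κ j * ((γ (hd j) - γ (tl j)) * (μ (hd j) - μ (tl j))) = 0 := by
    rw [← hdot]
    have h1 : (Z * B * Matrix.diagonal κ * Bᵀ).mulVec μ =
        Z.mulVec (B.mulVec ((Matrix.diagonal κ).mulVec (Bᵀ.mulVec μ))) := by
      simp [Matrix.mulVec_mulVec, Matrix.mul_assoc]
    rw [h1, Matrix.dotProduct_mulVec, ← Matrix.mulVec_transpose, ← hγ,
      Matrix.dotProduct_mulVec, ← Matrix.mulVec_transpose]
    simp only [dotProduct, Matrix.mulVec_diagonal]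
    apply Finset.sum_congr rfl
    intro j _
    rw [incidence_mulVec hd tl hht B hB γ j, incidence_mulVec hd tl hht B hB μ j]
    ring
  have hnonneg : ∀ j : Fin r,
      0 ≤ κ j * ((γ (hd j) - γ (tl j)) * (μ (hd j) - μ (tl j))) := by
    intro j
    apply mul_nonneg (hκ j).le
    rcases le_total (γ (tl j)) (γ (hd j)) with h | h
    · have h2 : μ (tl j) ≤ μ (hd j) := Real.exp_le_exp.mpr h
      nlinarith
    · have h2 : μ (hd j) ≤ μ (tl j) := Real.exp_le_exp.mpr h
      nlinarith
  have hzero : ∀ j : Fin r, γ (hd j) = γ (tl j) := by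
    intro j
    have hterm := (Finset.sum_eq_zero_iff_of_nonneg (fun j _ => hnonneg j)).mp key j
      (Finset.mem_univ j)
    have h2 : (γ (hd j) - γ (tl j)) * (μ (hd j) - μ (tl j)) = 0 := by
      rcases mul_eq_zero.mp hterm with h | h
      · exact absurd h (hκ j).ne'
      · exact h
    rcases mul_eq_zero.mp h2 with h | h
    · linarith [sub_eq_zero.mp h]
    · exact Real.exp_injective (sub_eq_zero.mp h)
  constructor
  · funext j
    rw [incidence_mulVec hd tl hht B hB μ j]
    simp [hμ, hzero j]
  · have hlog : (fun i => Real.log (xbar i)) = (fun i => Real.log (xs i)) + L := by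
      funext i
      simp [hL, Real.log_div (hxbar i).ne' (hxs i).ne']
    rw [hlog, Matrix.mulVec_add]
    have : (Z * B)ᵀ.mulVec L = Bᵀ.mulVec γ := by
      rw [Matrix.transpose_mul, ← Matrix.mulVec_mulVec, hγ]
    rw [this]
    have hBγ : Bᵀ.mulVec γ = 0 := by
      funext j
      rw [incidence_mulVec hd tl hht B hB γ j]
      simp [hzero j]
    rw [hBγ]
    simp
end

section
/- The Gibbs free energy decreases along every positive solution of the balanced reaction network: if x : ℝ → ℝ^m is differentiable, x(t) is componentwise positive for all t, and x satisfies ẋ(t) = f(x(t)) = −Z B K Bᵀ Exp(Zᵀ Ln(x(t)/x*)), then for every t the function s ↦ G(x(s)) has derivative at t equal to −μ(t)ᵀ B K Bᵀ Exp(μ(t)), where μ(t) = Zᵀ Ln(x(t)/x*), and this derivative is ≤ 0. -/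
open Matrix Real

/-- Along every componentwise positive solution of
`ẋ = −Z B K Bᵀ Exp(Zᵀ Ln(x/x*))`, the Gibbs free energy `G` satisfies
`d/dt G(x(t)) = −μ(t)ᵀ B K Bᵀ Exp(μ(t)) ≤ 0`, where `μ(t) = Zᵀ Ln(x(t)/x*)`. -/
theorem stmt_8 (m c r : ℕ) (hm : 0 < m) (hc : 0 < c) (hr : 0 < r)
    (hd tl : Fin r → Fin c) (hht : ∀ j, hd j ≠ tl j)
    (B : Matrix (Fin c) (Fin r) ℝ)
    (hB : ∀ i j, B i j = if i = hd j then 1 else if i = tl j then -1 else 0)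
    (κ : Fin r → ℝ) (hκ : ∀ j, 0 < κ j)
    (Z : Matrix (Fin m) (Fin c) ℝ)
    (xs : Fin m → ℝ) (hxs : ∀ i, 0 < xs i)
    (x : ℝ → Fin m → ℝ) (hpos : ∀ t i, 0 < x t i)
    (μ : ℝ → Fin c → ℝ)
    (hμ : ∀ t, μ t = Zᵀ.mulVec (fun i => Real.log (x t i / xs i)))
    (hode : ∀ t, HasDerivAt x
      (-(Z * B * Matrix.diagonal κ * Bᵀ).mulVec (fun ρ => Real.exp (μ t ρ))) t) :
    ∀ t, HasDerivAt (fun s => ∑ i, (x s i * Real.log (x s i / xs i) + xs i - x s i))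
        (-(μ t ⬝ᵥ (B * Matrix.diagonal κ * Bᵀ).mulVec (fun ρ => Real.exp (μ t ρ)))) t ∧
      -(μ t ⬝ᵥ (B * Matrix.diagonal κ * Bᵀ).mulVec (fun ρ => Real.exp (μ t ρ))) ≤ 0 := by
  intro t
  set e : Fin c → ℝ := fun ρ => Real.exp (μ t ρ) with he
  set v : Fin m → ℝ := -(Z * B * Matrix.diagonal κ * Bᵀ).mulVec e with hv
  -- B-transpose acting on vectors
  have hBsum : ∀ (j : Fin r) (f : Fin c → ℝ),
      (Bᵀ.mulVec f) j = f (hd j) - f (tl j) := by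
    intro j f
    have key : ∀ i : Fin c,
        B i j * f i = (if i = hd j then f i else 0) - (if i = tl j then f i else 0) := by
      intro i
      by_cases h1 : i = hd j <;> by_cases h2 : i = tl j <;>
        simp [hB, h1, h2, hht j, Ne.symm (hht j)]
    simp only [Matrix.mulVec, dotProduct, Matrix.transpose_apply]
    rw [Finset.sum_congr rfl (fun i _ => key i), Finset.sum_sub_distrib,
      Finset.sum_ite_eq' Finset.univ (hd j) f, Finset.sum_ite_eq' Finset.univ (tl j) f]
    simp
  -- component derivatives
  have hcomp : ∀ i, HasDerivAt (fun s => x s i) (v i) t := by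
    intro i
    rw [hv, he]
    exact (hasDerivAt_pi.mp (hode t)) i
  have hgi : ∀ i, HasDerivAt
      (fun s => x s i * Real.log (x s i / xs i) + xs i - x s i)
      (Real.log (x t i / xs i) * v i) t := by
    intro i
    have hxi := hcomp i
    have hlog : HasDerivAt (fun s => Real.log (x s i)) ((x t i)⁻¹ * v i) t :=
      by have := (Real.hasDerivAt_log (hpos t i).ne').comp t hxi; exact this
    have h2 : HasDerivAt (fun s => x s i * (Real.log (x s i) - Real.log (xs i)))
        (v i * (Real.log (x t i) - Real.log (xs i)) + x t i * ((x t i)⁻¹ * v i)) t :=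
      hxi.mul (hlog.sub_const _)
    have h3 := (h2.add_const (xs i)).sub hxi
    have funeq : (fun s => x s i * Real.log (x s i / xs i) + xs i - x s i)
        = (fun s => x s i * (Real.log (x s i) - Real.log (xs i)) + xs i - x s i) := by
      funext s
      rw [Real.log_div (hpos s i).ne' (hxs i).ne']
    rw [funeq]
    refine h3.congr_deriv ?_
    rw [Real.log_div (hpos t i).ne' (hxs i).ne']
    have hx : x t i * ((x t i)⁻¹ * v i) = v i := by
      rw [← mul_assoc, mul_inv_cancel₀ (hpos t i).ne', one_mul]
    rw [hx]
    ring
  have hsum := HasDerivAt.fun_sum (fun i (_ : i ∈ Finset.univ) => hgi i)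
  -- identify the derivative value
  have hval : ∑ i, Real.log (x t i / xs i) * v i
      = -(μ t ⬝ᵥ (B * Matrix.diagonal κ * Bᵀ).mulVec e) := by
    have h1 : ∑ i, Real.log (x t i / xs i) * v i
        = (fun i => Real.log (x t i / xs i)) ⬝ᵥ v := rfl
    rw [h1, hv, dotProduct_neg, Matrix.dotProduct_mulVec]
    congr 1
    rw [show Z * B * Matrix.diagonal κ * Bᵀ = Z * (B * Matrix.diagonal κ * Bᵀ) by
      simp [Matrix.mul_assoc]]
    rw [← Matrix.vecMul_vecMul, ← Matrix.dotProduct_mulVec]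
    congr 1
    rw [hμ t, ← Matrix.mulVec_transpose]
  refine ⟨?_, ?_⟩
  · rw [← hval]
    exact hsum
  · -- nonnegativity
    have hquad : μ t ⬝ᵥ (B * Matrix.diagonal κ * Bᵀ).mulVec e
        = ∑ j, (Bᵀ.mulVec (μ t)) j * (κ j * (Bᵀ.mulVec e) j) := by
      rw [← Matrix.mulVec_mulVec, ← Matrix.mulVec_mulVec, Matrix.dotProduct_mulVec,
        ← Matrix.mulVec_transpose]
      simp [dotProduct, Matrix.mulVec_diagonal]
    have hterm : ∀ j, 0 ≤ (Bᵀ.mulVec (μ t)) j * (κ j * (Bᵀ.mulVec e) j) := by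
      intro j
      rw [hBsum j, hBsum j, he]
      simp only
      rcases le_total (μ t (hd j)) (μ t (tl j)) with h | h
      · have e1 : Real.exp (μ t (hd j)) ≤ Real.exp (μ t (tl j)) := Real.exp_le_exp.2 h
        have heq : (μ t (hd j) - μ t (tl j)) *
              (κ j * (Real.exp (μ t (hd j)) - Real.exp (μ t (tl j))))
            = (μ t (tl j) - μ t (hd j)) *
              (κ j * (Real.exp (μ t (tl j)) - Real.exp (μ t (hd j)))) := by
          ring
        rw [heq]
        exact mul_nonneg (by linarith) (mul_nonneg (hκ j).le (by linarith))
      · have e1 : Real.exp (μ t (tl j)) ≤ Real.exp (μ t (hd j)) := Real.exp_le_exp.2 h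
        exact mul_nonneg (by linarith) (mul_nonneg (hκ j).le (by linarith))
    have hnn : 0 ≤ μ t ⬝ᵥ (B * Matrix.diagonal κ * Bᵀ).mulVec e := by
      rw [hquad]
      exact Finset.sum_nonneg fun j _ => hterm j
    linarith
end

section
/- Every persistent positive solution of the balanced reaction network converges to a thermodynamic equilibrium: if x : [0,∞) → ℝ^m is differentiable, x(t) is componentwise positive for all t ≥ 0, x satisfies ẋ(t) = −Z B K Bᵀ Exp(Zᵀ Ln(x(t)/x*)), and liminf_{t→∞} x_i(t) > 0 for every i ∈ {1,…,m}, then there exists a componentwise positive x** ∈ ℝ^m with Sᵀ Ln(x**) = Sᵀ Ln(x*) such that x(t) → x** as t → ∞. -/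
open Matrix Real Filter Topology

namespace Stmt9Aux

noncomputable def g (a y : ℝ) : ℝ := y * (Real.log y - Real.log a) - y + a

lemma g_self (a : ℝ) : g a a = 0 := by simp [g]

lemma g_nonneg {a y : ℝ} (ha : 0 < a) (hy : 0 < y) : 0 ≤ g a y := by
  have h := Real.log_le_sub_one_of_pos (x := a / y) (by positivity)
  have hlog : Real.log (a / y) = Real.log a - Real.log y :=
    Real.log_div (ne_of_gt ha) (ne_of_gt hy)
  rw [hlog] at h
  have := mul_le_mul_of_nonneg_left h (le_of_lt hy)
  unfold g
  have hyne : y ≠ 0 := ne_of_gt hy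
  nlinarith [mul_div_cancel₀ a hyne]

lemma g_pos {a y : ℝ} (ha : 0 < a) (hy : 0 < y) (hne : y ≠ a) : 0 < g a y := by
  have h := Real.log_lt_sub_one_of_pos (x := a / y) (by positivity)
    (by
      intro hcontra
      apply hne
      field_simp at hcontra
      linarith)
  have hlog : Real.log (a / y) = Real.log a - Real.log y :=
    Real.log_div (ne_of_gt ha) (ne_of_gt hy)
  rw [hlog] at h
  have := mul_lt_mul_of_pos_left h hy
  unfold g
  have hyne : y ≠ 0 := ne_of_gt hy
  nlinarith [mul_div_cancel₀ a hyne]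

lemma hasDerivAt_g (a : ℝ) {y : ℝ} (hy : 0 < y) :
    HasDerivAt (g a) (Real.log y - Real.log a) y := by
  have h1 : HasDerivAt (fun y => y * (Real.log y - Real.log a))
      (1 * (Real.log y - Real.log a) + y * (1 / y)) y :=
    (hasDerivAt_id y).mul ((Real.hasDerivAt_log (ne_of_gt hy)).sub_const _ |>.congr_deriv
      (by rw [one_div]))
  have h2 := (h1.sub (hasDerivAt_id y)).add_const a
  refine h2.congr_deriv ?_
  rw [mul_one_div_cancel (ne_of_gt hy)]; ring

lemma le_of_g_le {a y C : ℝ} (ha : 0 < a) (hy : 0 < y) (h : g a y ≤ C) :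
    y ≤ max (a * Real.exp 2) C := by
  rcases le_or_gt y (a * Real.exp 2) with h1 | h1
  · exact le_trans h1 (le_max_left _ _)
  · refine le_trans ?_ (le_max_right _ _)
    have h2 : Real.log y ≥ Real.log a + 2 := by
      have := Real.log_le_log (by positivity) (le_of_lt h1)
      rwa [Real.log_mul (ne_of_gt ha) (by positivity), Real.log_exp] at this
    unfold g at h
    nlinarith [h, hy]

lemma antitone_g (a : ℝ) (ha : 0 < a) : StrictAntiOn (g a) (Set.Ioc 0 a) := by
  apply strictAntiOn_of_deriv_neg (convex_Ioc 0 a)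
  · intro y hy
    exact ((hasDerivAt_g a hy.1).continuousAt).continuousWithinAt
  · intro y hy
    rw [interior_Ioc] at hy
    rw [(hasDerivAt_g a hy.1).deriv]
    have := Real.log_lt_log hy.1 hy.2
    linarith

lemma mono_g (a : ℝ) (ha : 0 < a) : StrictMonoOn (g a) (Set.Ici a) := by
  apply strictMonoOn_of_deriv_pos (convex_Ici a)
  · intro y hy
    exact ((hasDerivAt_g a (lt_of_lt_of_le ha hy)).continuousAt).continuousWithinAt
  · intro y hy
    rw [interior_Ici] at hy
    rw [(hasDerivAt_g a (lt_trans ha hy)).deriv]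
    have := Real.log_lt_log ha hy
    linarith

lemma abs_lt_of_g_lt {a : ℝ} (ha : 0 < a) {ε : ℝ} (hε : 0 < ε) :
    ∃ δ > 0, ∀ y > 0, g a y < δ → |y - a| < ε := by
  set ε' : ℝ := min ε (a / 2) with hε'
  have hε'pos : 0 < ε' := lt_min hε (by linarith)
  have hε'a : ε' < a := lt_of_le_of_lt (min_le_right _ _) (by linarith)
  refine ⟨min (g a (a - ε')) (g a (a + ε)), lt_min
    (g_pos ha (by linarith) (by linarith)) (g_pos ha (by linarith) (by linarith)), ?_⟩
  intro y hy hgy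
  rw [abs_sub_lt_iff]
  constructor
  · -- y - a < ε, i.e. y < a + ε
    by_contra hcon
    push_neg at hcon
    have hmem1 : (a + ε) ∈ Set.Ici a := by simp; linarith
    have hmem2 : y ∈ Set.Ici a := by simp; linarith
    have := (mono_g a ha).monotoneOn hmem1 hmem2 (by linarith)
    have h2 := lt_of_le_of_lt this hgy
    exact absurd (lt_min_iff.mp h2).2 (lt_irrefl _)
  · -- a - y < ε; enough a - y < ε' ≤ ε
    have : a - y < ε' := by
      by_contra hcon
      push_neg at hcon
      have hy2 : y ≤ a - ε' := by linarith
      have hmem1 : y ∈ Set.Ioc 0 a := ⟨hy, by linarith⟩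
      have hmem2 : (a - ε') ∈ Set.Ioc 0 a := ⟨by linarith, by linarith⟩
      have := (antitone_g a ha).antitoneOn hmem1 hmem2 hy2
      have h2 := lt_of_le_of_lt this hgy
      exact absurd (lt_min_iff.mp h2).1 (lt_irrefl _)
    exact lt_of_lt_of_le this (min_le_left _ _)

lemma mul_exp_sub_nonneg (a b : ℝ) : 0 ≤ (a - b) * (Real.exp a - Real.exp b) := by
  rcases le_total a b with h | h
  · have := Real.exp_le_exp.mpr h
    nlinarith
  · have := Real.exp_le_exp.mpr h
    exact mul_nonneg (by linarith) (by linarith)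

lemma eq_of_mul_exp_sub_eq_zero {a b : ℝ} (h : (a - b) * (Real.exp a - Real.exp b) = 0) :
    a = b := by
  by_contra hne
  rcases lt_or_gt_of_ne hne with hlt | hlt
  · have := Real.exp_lt_exp.mpr hlt
    nlinarith
  · have := Real.exp_lt_exp.mpr hlt
    nlinarith



section Vec

variable {m c r : ℕ} (hd tl : Fin r → Fin c)
variable (B : Matrix (Fin c) (Fin r) ℝ) (Z : Matrix (Fin m) (Fin c) ℝ)
variable (κ : Fin r → ℝ) (xs : Fin m → ℝ)

noncomputable def gam (a y : Fin m → ℝ) : Fin c → ℝ :=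
  Zᵀ.mulVec (fun i => Real.log (y i) - Real.log (a i))

noncomputable def Wfun (a y : Fin m → ℝ) : ℝ :=
  ∑ j, (κ j * Real.exp (gam Z xs a (hd j))) *
    ((gam Z a y (hd j) - gam Z a y (tl j)) *
      (Real.exp (gam Z a y (hd j)) - Real.exp (gam Z a y (tl j))))

noncomputable def Vfun (a y : Fin m → ℝ) : ℝ := ∑ i, g (a i) (y i)

lemma Bt_mulVec (hht : ∀ j, hd j ≠ tl j)
    (hB : ∀ i j, B i j = if i = hd j then 1 else if i = tl j then -1 else 0)
    (u : Fin c → ℝ) :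
    Bᵀ.mulVec u = fun j => u (hd j) - u (tl j) := by
  funext j
  have hBij : ∀ i, B i j = (if i = hd j then (1:ℝ) else 0) - (if i = tl j then 1 else 0) := by
    intro i
    rw [hB]
    rcases eq_or_ne i (hd j) with h1 | h1
    · subst h1
      simp [hht j]
    · simp only [if_neg h1]
      split <;> ring
  simp only [Matrix.mulVec, Matrix.transpose_apply, dotProduct]
  calc ∑ i, B i j * u i
      = ∑ i, ((if i = hd j then (1:ℝ) else 0) * u i - (if i = tl j then 1 else 0) * u i) := by
        refine Finset.sum_congr rfl fun i _ => ?_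
        rw [hBij i]; ring
    _ = u (hd j) - u (tl j) := by
        rw [Finset.sum_sub_distrib]
        simp [ite_mul, Finset.sum_ite_eq']

lemma dot_eq (hht : ∀ j, hd j ≠ tl j)
    (hB : ∀ i j, B i j = if i = hd j then 1 else if i = tl j then -1 else 0)
    (hxs : ∀ i, 0 < xs i) {a y : Fin m → ℝ} (_ha : ∀ i, 0 < a i) (hy : ∀ i, 0 < y i)
    (hcompat : ∀ j, gam Z xs a (hd j) = gam Z xs a (tl j)) :
    ∑ i, (Real.log (y i) - Real.log (a i)) *
      (-(Z * B * Matrix.diagonal κ * Bᵀ).mulVec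
        (fun ρ => Real.exp (Zᵀ.mulVec (fun i => Real.log (y i / xs i)) ρ))) i
    = -(Wfun hd tl Z κ xs a y) := by
  have hlogdiv : (fun i => Real.log (y i / xs i)) =
      fun i => Real.log (y i) - Real.log (xs i) :=
    funext fun i => Real.log_div (hy i).ne' (hxs i).ne'
  rw [hlogdiv]
  set v : Fin m → ℝ := fun i => Real.log (y i) - Real.log (a i) with hv
  set e : Fin c → ℝ :=
    fun ρ => Real.exp (Zᵀ.mulVec (fun i => Real.log (y i) - Real.log (xs i)) ρ) with he
  have hstep1 : ∑ i, v i * (-(Z * B * Matrix.diagonal κ * Bᵀ).mulVec e) i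
      = -(v ⬝ᵥ (Z * B * Matrix.diagonal κ * Bᵀ) *ᵥ e) := by
    simp only [Pi.neg_apply, mul_neg]
    rw [Finset.sum_neg_distrib]
    rfl
  rw [hstep1]
  have hMv : (Z * B * Matrix.diagonal κ * Bᵀ) *ᵥ e
      = Z *ᵥ (B *ᵥ ((Matrix.diagonal κ) *ᵥ (Bᵀ *ᵥ e))) := by
    rw [Matrix.mulVec_mulVec, Matrix.mulVec_mulVec, Matrix.mulVec_mulVec]
  rw [hMv]
  have hdot1 : v ⬝ᵥ Z *ᵥ (B *ᵥ ((Matrix.diagonal κ) *ᵥ (Bᵀ *ᵥ e)))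
      = (Zᵀ *ᵥ v) ⬝ᵥ (B *ᵥ ((Matrix.diagonal κ) *ᵥ (Bᵀ *ᵥ e))) := by
    rw [Matrix.dotProduct_mulVec, Matrix.mulVec_transpose Z v]
  have hdot2 : (Zᵀ *ᵥ v) ⬝ᵥ (B *ᵥ ((Matrix.diagonal κ) *ᵥ (Bᵀ *ᵥ e)))
      = (Bᵀ *ᵥ (Zᵀ *ᵥ v)) ⬝ᵥ ((Matrix.diagonal κ) *ᵥ (Bᵀ *ᵥ e)) := by
    rw [Matrix.dotProduct_mulVec, Matrix.mulVec_transpose B (Zᵀ *ᵥ v)]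
  rw [hdot1, hdot2, Bt_mulVec hd tl B hht hB, Bt_mulVec hd tl B hht hB]
  -- now compute the dot product as a sum over j
  have hgam : Zᵀ *ᵥ v = gam Z a y := rfl
  have hesplit : ∀ ρ, e ρ = Real.exp (gam Z a y ρ) * Real.exp (gam Z xs a ρ) := by
    intro ρ
    have : (fun i => Real.log (y i) - Real.log (xs i))
        = (fun i => Real.log (y i) - Real.log (a i)) + (fun i => Real.log (a i) - Real.log (xs i)) := by
      funext i; simp only [Pi.add_apply]; ring
    rw [he]
    simp only [this, Matrix.mulVec_add, Pi.add_apply, Real.exp_add]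
    rfl
  rw [hgam]
  unfold Wfun
  congr 1
  simp only [dotProduct, Matrix.mulVec_diagonal]
  refine Finset.sum_congr rfl fun j _ => ?_
  rw [hesplit (hd j), hesplit (tl j), hcompat j]
  ring


lemma term_nonneg (hκ : ∀ j, 0 < κ j) (a y : Fin m → ℝ) (j : Fin r) :
    0 ≤ (κ j * Real.exp (gam Z xs a (hd j))) *
      ((gam Z a y (hd j) - gam Z a y (tl j)) *
        (Real.exp (gam Z a y (hd j)) - Real.exp (gam Z a y (tl j)))) :=
  mul_nonneg (mul_nonneg (hκ j).le (Real.exp_pos _).le) (mul_exp_sub_nonneg _ _)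

lemma Wfun_nonneg (hκ : ∀ j, 0 < κ j) (a y : Fin m → ℝ) :
    0 ≤ Wfun hd tl Z κ xs a y :=
  Finset.sum_nonneg fun j _ => term_nonneg hd tl Z κ xs hκ a y j

lemma gam_eq_of_Wfun_zero (hκ : ∀ j, 0 < κ j) {a y : Fin m → ℝ}
    (h : Wfun hd tl Z κ xs a y = 0) (j : Fin r) :
    gam Z a y (hd j) = gam Z a y (tl j) := by
  have hterm := (Finset.sum_eq_zero_iff_of_nonneg
    (fun j _ => term_nonneg hd tl Z κ xs hκ a y j)).mp h j (Finset.mem_univ j)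
  have hpos : (0:ℝ) < κ j * Real.exp (gam Z xs a (hd j)) :=
    mul_pos (hκ j) (Real.exp_pos _)
  have h2 : (gam Z a y (hd j) - gam Z a y (tl j)) *
      (Real.exp (gam Z a y (hd j)) - Real.exp (gam Z a y (tl j))) = 0 := by
    rcases mul_eq_zero.mp hterm with h' | h'
    · exact absurd h' (ne_of_gt hpos)
    · exact h'
  exact eq_of_mul_exp_sub_eq_zero h2

lemma Vfun_nonneg {a y : Fin m → ℝ} (ha : ∀ i, 0 < a i) (hy : ∀ i, 0 < y i) :
    0 ≤ Vfun a y :=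
  Finset.sum_nonneg fun i _ => g_nonneg (ha i) (hy i)

lemma g_le_Vfun {a y : Fin m → ℝ} (ha : ∀ i, 0 < a i) (hy : ∀ i, 0 < y i) (i : Fin m) :
    g (a i) (y i) ≤ Vfun a y :=
  Finset.single_le_sum (fun i _ => g_nonneg (ha i) (hy i)) (Finset.mem_univ i)

lemma continuousAt_log_comp {p : Fin m → ℝ} (hp : ∀ i, 0 < p i) (i : Fin m) :
    ContinuousAt (fun y : Fin m → ℝ => Real.log (y i)) p := by
  have h1 : ContinuousAt (fun y : Fin m → ℝ => y i) p := (continuous_apply i).continuousAt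
  exact h1.log (hp i).ne'

lemma continuousAt_gam (base : Fin m → ℝ) {p : Fin m → ℝ} (hp : ∀ i, 0 < p i) (ρ : Fin c) :
    ContinuousAt (fun y => gam Z base y ρ) p := by
  have : (fun y : Fin m → ℝ => gam Z base y ρ)
      = fun y => ∑ i, Zᵀ ρ i * (Real.log (y i) - Real.log (base i)) := rfl
  rw [this]
  exact tendsto_finset_sum _ fun i _ =>
    (continuousAt_const.mul ((continuousAt_log_comp hp i).sub continuousAt_const))

lemma continuousAt_W (a : Fin m → ℝ) {p : Fin m → ℝ} (hp : ∀ i, 0 < p i) :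
    ContinuousAt (fun y => Wfun hd tl Z κ xs a y) p := by
  unfold Wfun
  exact tendsto_finset_sum _ fun j _ =>
    continuousAt_const.mul
      (((continuousAt_gam Z a hp (hd j)).sub (continuousAt_gam Z a hp (tl j))).mul
        (((continuousAt_gam Z a hp (hd j)).rexp).sub
          ((continuousAt_gam Z a hp (tl j)).rexp)))

lemma continuousAt_V (a : Fin m → ℝ) {p : Fin m → ℝ} (hp : ∀ i, 0 < p i) :
    ContinuousAt (Vfun a) p := by
  unfold Vfun g
  exact tendsto_finset_sum _ fun i _ =>
    ((((continuous_apply i).continuousAt.mul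
      ((continuousAt_log_comp hp i).sub continuousAt_const)).sub
        (continuous_apply i).continuousAt).add continuousAt_const)


lemma hasDeriv_V (hht : ∀ j, hd j ≠ tl j)
    (hB : ∀ i j, B i j = if i = hd j then 1 else if i = tl j then -1 else 0)
    (hxs : ∀ i, 0 < xs i)
    (x : ℝ → Fin m → ℝ) (hpos : ∀ t ∈ Set.Ici (0 : ℝ), ∀ i, 0 < x t i)
    (hode : ∀ t ∈ Set.Ici (0 : ℝ), HasDerivWithinAt x
      (-(Z * B * Matrix.diagonal κ * Bᵀ).mulVec
        (fun ρ => Real.exp (Zᵀ.mulVec (fun i => Real.log (x t i / xs i)) ρ)))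
      (Set.Ici (0 : ℝ)) t)
    {a : Fin m → ℝ} (ha : ∀ i, 0 < a i)
    (hcompat : ∀ j, gam Z xs a (hd j) = gam Z xs a (tl j))
    {t : ℝ} (ht : t ∈ Set.Ici (0 : ℝ)) :
    HasDerivWithinAt (fun s => Vfun a (x s)) (-(Wfun hd tl Z κ xs a (x t)))
      (Set.Ici (0 : ℝ)) t := by
  have hsum : HasDerivWithinAt (fun s => Vfun a (x s))
      (∑ i, (Real.log (x t i) - Real.log (a i)) *
        (-(Z * B * Matrix.diagonal κ * Bᵀ).mulVec
          (fun ρ => Real.exp (Zᵀ.mulVec (fun i => Real.log (x t i / xs i)) ρ))) i)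
      (Set.Ici 0) t := by
    unfold Vfun
    exact HasDerivWithinAt.fun_sum fun i _ => by
      have h := (hasDerivAt_g (a i) (hpos t ht i)).comp_hasDerivWithinAt t
        (hasDerivWithinAt_pi.mp (hode t ht) i)
      exact h
  rwa [dot_eq hd tl B Z κ xs hht hB hxs ha (hpos t ht) hcompat] at hsum

lemma V_antitoneOn (hht : ∀ j, hd j ≠ tl j)
    (hB : ∀ i j, B i j = if i = hd j then 1 else if i = tl j then -1 else 0)
    (hκ : ∀ j, 0 < κ j) (hxs : ∀ i, 0 < xs i)
    (x : ℝ → Fin m → ℝ) (hpos : ∀ t ∈ Set.Ici (0 : ℝ), ∀ i, 0 < x t i)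
    (hode : ∀ t ∈ Set.Ici (0 : ℝ), HasDerivWithinAt x
      (-(Z * B * Matrix.diagonal κ * Bᵀ).mulVec
        (fun ρ => Real.exp (Zᵀ.mulVec (fun i => Real.log (x t i / xs i)) ρ)))
      (Set.Ici (0 : ℝ)) t)
    {a : Fin m → ℝ} (ha : ∀ i, 0 < a i)
    (hcompat : ∀ j, gam Z xs a (hd j) = gam Z xs a (tl j)) :
    AntitoneOn (fun s => Vfun a (x s)) (Set.Ici (0 : ℝ)) := by
  apply antitoneOn_of_deriv_nonpos (convex_Ici 0)
  · intro t ht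
    exact (hasDeriv_V hd tl B Z κ xs hht hB hxs x hpos hode ha hcompat ht).continuousWithinAt
  · intro t ht
    rw [interior_Ici] at ht
    exact ((hasDeriv_V hd tl B Z κ xs hht hB hxs x hpos hode ha hcompat
      (Set.mem_Ici.mpr (le_of_lt ht))).hasDerivAt
        (Ici_mem_nhds ht)).differentiableAt.differentiableWithinAt
  · intro t ht
    rw [interior_Ici] at ht
    rw [((hasDeriv_V hd tl B Z κ xs hht hB hxs x hpos hode ha hcompat
      (Set.mem_Ici.mpr (le_of_lt ht))).hasDerivAt (Ici_mem_nhds ht)).deriv]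
    simp only [neg_nonpos]
    exact Wfun_nonneg hd tl Z κ xs hκ a (x t)


lemma gam_self (ρ : Fin c) : gam Z xs xs ρ = 0 := by
  have h0 : (fun i => Real.log (xs i) - Real.log (xs i)) = (0 : Fin m → ℝ) :=
    funext fun i => sub_self _
  unfold gam
  rw [h0, Matrix.mulVec_zero]
  rfl

lemma exists_small_W (hht : ∀ j, hd j ≠ tl j)
    (hB : ∀ i j, B i j = if i = hd j then 1 else if i = tl j then -1 else 0)
    (hκ : ∀ j, 0 < κ j) (hxs : ∀ i, 0 < xs i)
    (x : ℝ → Fin m → ℝ) (hpos : ∀ t ∈ Set.Ici (0 : ℝ), ∀ i, 0 < x t i)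
    (hode : ∀ t ∈ Set.Ici (0 : ℝ), HasDerivWithinAt x
      (-(Z * B * Matrix.diagonal κ * Bᵀ).mulVec
        (fun ρ => Real.exp (Zᵀ.mulVec (fun i => Real.log (x t i / xs i)) ρ)))
      (Set.Ici (0 : ℝ)) t)
    {T : ℝ} (hT : 0 ≤ T) {δ : ℝ} (hδ : 0 < δ) :
    ∃ t ≥ T, Wfun hd tl Z κ xs xs (x t) < δ := by
  by_contra hcon
  push_neg at hcon
  have hcompat0 : ∀ j, gam Z xs xs (hd j) = gam Z xs xs (tl j) := by
    intro j; rw [gam_self, gam_self]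
  -- φ is antitone on Ici T
  have hφd : ∀ t ∈ Set.Ici T, HasDerivWithinAt
      (fun s => Vfun xs (x s) + δ * s) (-(Wfun hd tl Z κ xs xs (x t)) + δ)
      (Set.Ici T) t := by
    intro t ht
    have ht0 : t ∈ Set.Ici (0:ℝ) := Set.mem_Ici.mpr (le_trans hT ht)
    have h1 := (hasDeriv_V hd tl B Z κ xs hht hB hxs x hpos hode hxs hcompat0 ht0).mono
      (Set.Ici_subset_Ici.mpr hT)
    have h2 : HasDerivAt (fun s : ℝ => δ * s) δ t := by
      simpa using (hasDerivAt_id t).const_mul δ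
    exact h1.add h2.hasDerivWithinAt
  have hanti : AntitoneOn (fun s => Vfun xs (x s) + δ * s) (Set.Ici T) := by
    apply antitoneOn_of_deriv_nonpos (convex_Ici T)
    · intro t ht
      exact (hφd t ht).continuousWithinAt
    · intro t ht
      rw [interior_Ici] at ht
      exact ((hφd t (Set.mem_Ici.mpr (le_of_lt ht))).hasDerivAt
        (Ici_mem_nhds ht)).differentiableAt.differentiableWithinAt
    · intro t ht
      rw [interior_Ici] at ht
      rw [((hφd t (Set.mem_Ici.mpr (le_of_lt ht))).hasDerivAt (Ici_mem_nhds ht)).deriv]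
      have := hcon t (le_of_lt ht)
      linarith
  set t1 : ℝ := T + (Vfun xs (x T) + 1) / δ with ht1
  have hVT : 0 ≤ Vfun xs (x T) := Vfun_nonneg hxs (hpos T (Set.mem_Ici.mpr hT))
  have htT : T ≤ t1 := by
    rw [ht1]
    have : 0 ≤ (Vfun xs (x T) + 1) / δ := by positivity
    linarith
  have hle := hanti (Set.mem_Ici.mpr (le_refl T)) (Set.mem_Ici.mpr htT) htT
  have hVt1 : 0 ≤ Vfun xs (x t1) :=
    Vfun_nonneg hxs (hpos t1 (Set.mem_Ici.mpr (le_trans hT htT)))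
  have hδt1 : δ * t1 = δ * T + (Vfun xs (x T) + 1) := by
    rw [ht1]; field_simp
  simp only at hle
  rw [hδt1] at hle
  linarith


lemma ZB_eq (hht : ∀ j, hd j ≠ tl j)
    (hB : ∀ i j, B i j = if i = hd j then 1 else if i = tl j then -1 else 0)
    {a : Fin m → ℝ} (hcompat : ∀ j, gam Z xs a (hd j) = gam Z xs a (tl j)) :
    (Z * B)ᵀ.mulVec (fun i => Real.log (a i)) =
      (Z * B)ᵀ.mulVec (fun i => Real.log (xs i)) := by
  funext j
  have h1 : ∀ v : Fin m → ℝ, (Z * B)ᵀ.mulVec v j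
      = (Zᵀ *ᵥ v) (hd j) - (Zᵀ *ᵥ v) (tl j) := by
    intro v
    rw [Matrix.transpose_mul, ← Matrix.mulVec_mulVec, Bt_mulVec hd tl B hht hB]
  rw [h1, h1]
  have h2 := hcompat j
  have h3 : ∀ ρ, gam Z xs a ρ = (Zᵀ *ᵥ fun i => Real.log (a i)) ρ
      - (Zᵀ *ᵥ fun i => Real.log (xs i)) ρ := by
    intro ρ
    unfold gam
    have hfe : (fun i => Real.log (a i) - Real.log (xs i))
        = (fun i => Real.log (a i)) - (fun i => Real.log (xs i)) := rfl
    rw [hfe, Matrix.mulVec_sub]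
    rfl
  rw [h3, h3] at h2
  linarith

end Vec

end Stmt9Aux


/-- Every persistent componentwise positive solution of
`ẋ = −Z B K Bᵀ Exp(Zᵀ Ln(x/x*))` on `[0,∞)` converges to a thermodynamic equilibrium,
i.e. to some `x** > 0` with `Sᵀ Ln(x**) = Sᵀ Ln(x*)` (`S = Z B`).  Persistence
(`liminf_{t→∞} x_i(t) > 0`) is expressed as an eventual positive lower bound. -/
theorem stmt_9 (m c r : ℕ) (hm : 0 < m) (hc : 0 < c) (hr : 0 < r)
    (hd tl : Fin r → Fin c) (hht : ∀ j, hd j ≠ tl j)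
    (B : Matrix (Fin c) (Fin r) ℝ)
    (hB : ∀ i j, B i j = if i = hd j then 1 else if i = tl j then -1 else 0)
    (κ : Fin r → ℝ) (hκ : ∀ j, 0 < κ j)
    (Z : Matrix (Fin m) (Fin c) ℝ)
    (xs : Fin m → ℝ) (hxs : ∀ i, 0 < xs i)
    (x : ℝ → Fin m → ℝ) (hpos : ∀ t ∈ Set.Ici (0 : ℝ), ∀ i, 0 < x t i)
    (hode : ∀ t ∈ Set.Ici (0 : ℝ), HasDerivWithinAt x
      (-(Z * B * Matrix.diagonal κ * Bᵀ).mulVec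
        (fun ρ => Real.exp (Zᵀ.mulVec (fun i => Real.log (x t i / xs i)) ρ)))
      (Set.Ici (0 : ℝ)) t)
    (hpersist : ∀ i, ∃ ε > (0 : ℝ), ∀ᶠ t in atTop, ε ≤ x t i) :
    ∃ xss : Fin m → ℝ, (∀ i, 0 < xss i) ∧
      (Z * B)ᵀ.mulVec (fun i => Real.log (xss i)) =
        (Z * B)ᵀ.mulVec (fun i => Real.log (xs i)) ∧
      Tendsto x atTop (𝓝 xss) := by
  classical
  have hcompat0 : ∀ j, Stmt9Aux.gam Z xs xs (hd j) = Stmt9Aux.gam Z xs xs (tl j) :=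
    fun j => by rw [Stmt9Aux.gam_self, Stmt9Aux.gam_self]
  -- persistence: uniform lower bounds from some time T on
  choose ε hε hev using hpersist
  obtain ⟨T0, hT0⟩ := eventually_atTop.mp (eventually_all.mpr hev)
  set T : ℝ := max T0 0 with hTdef
  have hT : (0:ℝ) ≤ T := le_max_right _ _
  have hlow : ∀ t, T ≤ t → ∀ i, ε i ≤ x t i :=
    fun t ht i => hT0 t (le_trans (le_max_left _ _) ht) i
  -- the Lyapunov function for xs is antitone, giving upper bounds
  have hanti0 : AntitoneOn (fun s => Stmt9Aux.Vfun xs (x s)) (Set.Ici 0) :=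
    Stmt9Aux.V_antitoneOn hd tl B Z κ xs hht hB hκ hxs x hpos hode hxs hcompat0
  set C : ℝ := Stmt9Aux.Vfun xs (x 0) with hCdef
  set M : Fin m → ℝ := fun i => max (xs i * Real.exp 2) C with hMdef
  have hbd : ∀ t, (0:ℝ) ≤ t → ∀ i, x t i ≤ M i := by
    intro t ht i
    have h1 : Stmt9Aux.Vfun xs (x t) ≤ C :=
      hanti0 (Set.self_mem_Ici) (Set.mem_Ici.mpr ht) ht
    have h2 : Stmt9Aux.g (xs i) (x t i) ≤ Stmt9Aux.Vfun xs (x t) :=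
      Stmt9Aux.g_le_Vfun hxs (hpos t ht) i
    exact Stmt9Aux.le_of_g_le (hxs i) (hpos t ht i) (le_trans h2 h1)
  -- compact box
  set K : Set (Fin m → ℝ) := Set.pi Set.univ (fun i => Set.Icc (ε i) (M i)) with hKdef
  have hKcomp : IsCompact K := isCompact_univ_pi fun i => isCompact_Icc
  -- a sequence of times with vanishing dissipation
  have hseq : ∀ k : ℕ, ∃ t ≥ max T (k:ℝ),
      Stmt9Aux.Wfun hd tl Z κ xs xs (x t) < 1/((k:ℝ)+1) :=
    fun k => Stmt9Aux.exists_small_W hd tl B Z κ xs hht hB hκ hxs x hpos hode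
      (le_trans hT (le_max_left _ _)) (by positivity)
  choose ts hts hWts using hseq
  have htsT : ∀ k, T ≤ ts k := fun k => le_trans (le_max_left _ _) (hts k)
  have hts0 : ∀ k, (0:ℝ) ≤ ts k := fun k => le_trans hT (htsT k)
  have hmem : ∀ k, x (ts k) ∈ K := by
    intro k
    rw [hKdef, Set.mem_pi]
    intro i _
    exact ⟨hlow (ts k) (htsT k) i, hbd (ts k) (hts0 k) i⟩
  obtain ⟨xb, hxbK, φ, hφmono, hφconv⟩ := hKcomp.tendsto_subseq hmem
  have hxbpos : ∀ i, 0 < xb i := by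
    intro i
    have := (Set.mem_pi.mp hxbK) i (Set.mem_univ i)
    exact lt_of_lt_of_le (hε i) this.1
  -- the dissipation vanishes at xb
  have hWconv : Tendsto (fun k => Stmt9Aux.Wfun hd tl Z κ xs xs (x (ts (φ k))))
      atTop (𝓝 0) := by
    apply squeeze_zero
      (fun k => Stmt9Aux.Wfun_nonneg hd tl Z κ xs hκ xs (x (ts (φ k))))
      (g := fun k : ℕ => 1/((k:ℝ)+1))
    · intro k
      refine le_trans (le_of_lt (hWts (φ k))) ?_
      have h1 : ((k:ℝ)+1) ≤ ((φ k : ℝ)+1) :=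
        add_le_add_left (Nat.cast_le.mpr hφmono.le_apply) 1
      exact one_div_le_one_div_of_le (by positivity) h1
    · exact tendsto_one_div_add_atTop_nhds_zero_nat
  have hWcont : Tendsto (fun k => Stmt9Aux.Wfun hd tl Z κ xs xs (x (ts (φ k))))
      atTop (𝓝 (Stmt9Aux.Wfun hd tl Z κ xs xs xb)) :=
    (Stmt9Aux.continuousAt_W hd tl Z κ xs xs hxbpos).tendsto.comp hφconv
  have hWxb : Stmt9Aux.Wfun hd tl Z κ xs xs xb = 0 := tendsto_nhds_unique hWcont hWconv
  have hcompatb : ∀ j, Stmt9Aux.gam Z xs xb (hd j) = Stmt9Aux.gam Z xs xb (tl j) :=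
    Stmt9Aux.gam_eq_of_Wfun_zero hd tl Z κ xs hκ hWxb
  refine ⟨xb, hxbpos, Stmt9Aux.ZB_eq hd tl B Z xs hht hB hcompatb, ?_⟩
  -- second Lyapunov function, centered at xb
  have hanti2 : AntitoneOn (fun s => Stmt9Aux.Vfun xb (x s)) (Set.Ici 0) :=
    Stmt9Aux.V_antitoneOn hd tl B Z κ xs hht hB hκ hxs x hpos hode hxbpos hcompatb
  have hV2conv : Tendsto (fun k => Stmt9Aux.Vfun xb (x (ts (φ k)))) atTop (𝓝 0) := by
    have h0 : Stmt9Aux.Vfun xb xb = 0 := by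
      unfold Stmt9Aux.Vfun
      simp [Stmt9Aux.g_self]
    have := (Stmt9Aux.continuousAt_V xb hxbpos).tendsto.comp hφconv
    rwa [h0] at this
  have hVto0 : Tendsto (fun t => Stmt9Aux.Vfun xb (x t)) atTop (𝓝 0) := by
    rw [Metric.tendsto_atTop]
    intro δ hδ
    obtain ⟨N, hN⟩ := Metric.tendsto_atTop.mp hV2conv δ hδ
    refine ⟨ts (φ N), fun t ht => ?_⟩
    have htpos : (0:ℝ) ≤ t := le_trans (hts0 (φ N)) ht
    have hmono := hanti2 (Set.mem_Ici.mpr (hts0 (φ N))) (Set.mem_Ici.mpr htpos) ht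
    have hVnn : 0 ≤ Stmt9Aux.Vfun xb (x t) := Stmt9Aux.Vfun_nonneg hxbpos (hpos t htpos)
    have hNval := hN N le_rfl
    rw [Real.dist_eq, sub_zero] at hNval ⊢
    rw [abs_of_nonneg hVnn]
    exact lt_of_le_of_lt (le_trans hmono (le_abs_self _)) hNval
  -- coordinatewise convergence
  rw [tendsto_pi_nhds]
  intro i
  rw [Metric.tendsto_atTop]
  intro εi hεi
  obtain ⟨δi, hδi, hδprop⟩ := Stmt9Aux.abs_lt_of_g_lt (hxbpos i) hεi
  obtain ⟨N, hN⟩ := Metric.tendsto_atTop.mp hVto0 δi hδi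
  refine ⟨max N 0, fun t ht => ?_⟩
  have ht0 : (0:ℝ) ≤ t := le_trans (le_max_right _ _) ht
  have hVlt : Stmt9Aux.Vfun xb (x t) < δi := by
    have := hN t (le_trans (le_max_left _ _) ht)
    rw [Real.dist_eq, sub_zero] at this
    exact lt_of_le_of_lt (le_abs_self _) this
  have hg : Stmt9Aux.g (xb i) (x t i) < δi :=
    lt_of_le_of_lt (Stmt9Aux.g_le_Vfun hxbpos (hpos t ht0) i) hVlt
  rw [Real.dist_eq]
  exact hδprop (x t i) (hpos t ht0 i) hg
end

section
/- For a connected compartmental graph, the equilibria of the closed compartmental reaction–diffusion model are exactly the spatially uniform thermodynamic equilibria: a state X̄ = (x̄^1,…,x̄^N) with all compartments componentwise positive satisfies, for all k and i, 0 = −(1/m0_k) Σ_{j=1}^{N_e} D_{j k} m1_j r_{j,i}(X̄) (Σ_{l=1}^N D_{j l} x̄^l_i/x*_i) + f_i(x̄^k) if and only if x̄^1 = x̄^2 = ⋯ = x̄^N and Sᵀ Ln(x̄^1) = Sᵀ Ln(x*). -/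
open Matrix Real


lemma aux_sum_pm {n : ℕ} {p q : Fin n} (hpq : p ≠ q) {cf : Fin n → ℝ}
    (h1 : cf p = 1) (h2 : cf q = -1) (h0 : ∀ l, l ≠ p → l ≠ q → cf l = 0)
    (v : Fin n → ℝ) :
    ∑ l, cf l * v l = v p - v q := by
  have key : ∀ l, cf l * v l =
      (if p = l then v l else 0) + (if q = l then -v l else 0) := by
    intro l
    by_cases hp : l = p
    · subst hp
      simp [h1, (Ne.symm hpq)]
    · by_cases hq : l = q
      · subst hq
        simp [h2, hpq]
      · simp [h0 l hp hq, Ne.symm hp, Ne.symm hq]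
  rw [Finset.sum_congr rfl (fun l _ => key l), Finset.sum_add_distrib,
    Finset.sum_ite_eq, Finset.sum_ite_eq]
  simp [sub_eq_add_neg]

lemma aux_exp_nonneg (a b : ℝ) : 0 ≤ (a - b) * (Real.exp a - Real.exp b) := by
  rcases le_total a b with h | h
  · have h1 : Real.exp a ≤ Real.exp b := Real.exp_le_exp.2 h
    nlinarith
  · have h1 : Real.exp b ≤ Real.exp a := Real.exp_le_exp.2 h
    nlinarith

lemma aux_exp_eq {a b : ℝ} (h : (a - b) * (Real.exp a - Real.exp b) = 0) : a = b := by
  by_contra hne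
  rcases lt_or_gt_of_ne hne with hlt | hlt
  · have h1 : Real.exp a < Real.exp b := Real.exp_lt_exp.2 hlt
    nlinarith
  · have h1 : Real.exp b < Real.exp a := Real.exp_lt_exp.2 hlt
    nlinarith

lemma aux_log_nonneg {a b : ℝ} (ha : 0 < a) (hb : 0 < b) :
    0 ≤ (a - b) * (Real.log a - Real.log b) := by
  rcases le_total a b with h | h
  · have h1 : Real.log a ≤ Real.log b := Real.log_le_log ha h
    nlinarith
  · have h1 : Real.log b ≤ Real.log a := Real.log_le_log hb h
    nlinarith

lemma aux_log_eq {a b : ℝ} (ha : 0 < a) (hb : 0 < b)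
    (h : (a - b) * (Real.log a - Real.log b) = 0) : a = b := by
  by_contra hne
  rcases lt_or_gt_of_ne hne with hlt | hlt
  · have h1 : Real.log a < Real.log b := Real.log_lt_log ha hlt
    nlinarith
  · have h1 : Real.log b < Real.log a := Real.log_lt_log hb hlt
    nlinarith

lemma aux_pair_transfer {m c : ℕ} (Z : Matrix (Fin m) (Fin c) ℝ)
    (u : Fin m → ℝ) (z : Fin c → ℝ) :
    ∑ i, u i * Z.mulVec z i = ∑ ρ, Zᵀ.mulVec u ρ * z ρ := by
  simp only [Matrix.mulVec, dotProduct, Matrix.transpose_apply,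
    Finset.mul_sum, Finset.sum_mul]
  rw [Finset.sum_comm]
  exact Finset.sum_congr rfl fun ρ _ => Finset.sum_congr rfl fun i _ => by ring

/-- For a connected compartmental graph, the equilibria of the closed
compartmental model are exactly the spatially uniform thermodynamic equilibria:
a componentwise positive state `X̄ = (x̄^1,…,x̄^N)` satisfies
`0 = −(1/m0_k) ∑_j D_{jk} m1_j r_{j,i}(X̄) (∑_l D_{jl} x̄^l_i/x*_i) + f_i(x̄^k)` for all
`k, i` iff all compartments are equal and `Sᵀ Ln(x̄^1) = Sᵀ Ln(x*)` (`S = Z B`). -/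
theorem stmt_11 (m c r : ℕ) (hm : 0 < m) (hc : 0 < c) (hr : 0 < r)
    (hd tl : Fin r → Fin c) (hht : ∀ j, hd j ≠ tl j)
    (B : Matrix (Fin c) (Fin r) ℝ)
    (hB : ∀ i j, B i j = if i = hd j then 1 else if i = tl j then -1 else 0)
    (κ : Fin r → ℝ) (hκ : ∀ j, 0 < κ j)
    (Z : Matrix (Fin m) (Fin c) ℝ)
    (xs : Fin m → ℝ) (hxs : ∀ i, 0 < xs i)
    (N Ne : ℕ) (hN : 0 < N) (hNe : 0 < Ne)
    (D : Matrix (Fin Ne) (Fin N) ℝ)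
    (hD : ∀ j, ∃ p q : Fin N, p ≠ q ∧ D j p = 1 ∧ D j q = -1 ∧
      ∀ l, l ≠ p → l ≠ q → D j l = 0)
    (hconn : ∀ v : Fin N → ℝ, D.mulVec v = 0 → ∀ k l, v k = v l)
    (m0 : Fin N → ℝ) (hm0 : ∀ k, 0 < m0 k)
    (m1 : Fin Ne → ℝ) (hm1 : ∀ j, 0 < m1 j)
    (rr : Fin Ne → Fin m → (Fin N → Fin m → ℝ) → ℝ)
    (hrcont : ∀ j i, Continuous (rr j i))
    (α : ℝ) (hα : 0 < α) (hrα : ∀ j i X, α ≤ rr j i X)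
    (xbar : Fin N → Fin m → ℝ) (hxbar : ∀ k i, 0 < xbar k i) :
    (∀ k i, (0 : ℝ) =
        -(1 / m0 k) * ∑ j, D j k * m1 j * rr j i xbar * (∑ l, D j l * (xbar l i / xs i))
          + (-(Z * B * Matrix.diagonal κ * Bᵀ).mulVec
              (fun ρ => Real.exp (Zᵀ.mulVec (fun i' => Real.log (xbar k i' / xs i')) ρ))) i)
      ↔ ((∀ k l, xbar k = xbar l) ∧
        ∀ k, (Z * B)ᵀ.mulVec (fun i => Real.log (xbar k i)) =
          (Z * B)ᵀ.mulVec (fun i => Real.log (xs i))) := by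
  classical
  -- notation
  set y : Fin N → Fin m → ℝ := fun k i => xbar k i / xs i with hy
  have hypos : ∀ k i, 0 < y k i := fun k i => div_pos (hxbar k i) (hxs i)
  set Lg : Fin N → Fin m → ℝ := fun k i => Real.log (xbar k i / xs i) with hLg
  set γ : Fin N → Fin c → ℝ := fun k => Zᵀ.mulVec (Lg k) with hγ
  set F : Fin N → Fin m → ℝ := fun k =>
    (Z * B * Matrix.diagonal κ * Bᵀ).mulVec (fun ρ => Real.exp (γ k ρ)) with hF
  -- D rows
  choose p q hpq hDp hDq hD0 using hD
  have hDsum : ∀ j (v : Fin N → ℝ), ∑ l, D j l * v l = v (p j) - v (q j) :=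
    fun j v => aux_sum_pm (hpq j) (hDp j) (hDq j) (hD0 j) v
  -- B transpose action
  have hBT : ∀ (v : Fin c → ℝ) j, Bᵀ.mulVec v j = v (hd j) - v (tl j) := by
    intro v j
    have h1 : B (hd j) j = 1 := by simp [hB]
    have h2 : B (tl j) j = -1 := by
      rw [hB]; rw [if_neg (hht j).symm, if_pos rfl]
    have h0 : ∀ i, i ≠ hd j → i ≠ tl j → B i j = 0 := by
      intro i hih hit; rw [hB, if_neg hih, if_neg hit]
    have := aux_sum_pm (hht j) h1 h2 h0 v
    simpa [Matrix.mulVec, dotProduct, Matrix.transpose_apply] using this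
  -- expanding F against a vector
  have hFmv : ∀ k, F k = Z.mulVec (B.mulVec
      (fun j => κ j * (Real.exp (γ k (hd j)) - Real.exp (γ k (tl j))))) := by
    intro k
    rw [hF]
    have : (fun j => κ j * (Real.exp (γ k (hd j)) - Real.exp (γ k (tl j))))
        = (Matrix.diagonal κ).mulVec (Bᵀ.mulVec (fun ρ => Real.exp (γ k ρ))) := by
      funext j
      rw [Matrix.mulVec_diagonal, hBT]
    rw [this, Matrix.mulVec_mulVec, Matrix.mulVec_mulVec, Matrix.mulVec_mulVec]
  have hchem : ∀ k, ∑ i, Lg k i * F k i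
      = ∑ j, κ j * ((γ k (hd j) - γ k (tl j))
          * (Real.exp (γ k (hd j)) - Real.exp (γ k (tl j)))) := by
    intro k
    have hγk : Zᵀ.mulVec (Lg k) = γ k := rfl
    have h2 := aux_pair_transfer B (Zᵀ.mulVec (Lg k))
      (fun j => κ j * (Real.exp (γ k (hd j)) - Real.exp (γ k (tl j))))
    rw [hFmv k, aux_pair_transfer, h2, hγk]
    refine Finset.sum_congr rfl fun j _ => ?_
    rw [hBT]; ring
  -- the diffusion inner sum
  set Sd : Fin N → Fin m → ℝ := fun k i =>
    ∑ j, D j k * m1 j * rr j i xbar * (∑ l, D j l * (xbar l i / xs i)) with hSd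
  -- key rearrangement for the diffusion part
  have hdiff : ∀ i, ∑ k, Lg k i * Sd k i
      = ∑ j, m1 j * rr j i xbar * ((y (p j) i - y (q j) i) * (Lg (p j) i - Lg (q j) i)) := by
    intro i
    have step1 : ∀ k, Lg k i * Sd k i
        = ∑ j, (m1 j * rr j i xbar * (y (p j) i - y (q j) i)) * (D j k * Lg k i) := by
      intro k
      rw [hSd]
      rw [Finset.mul_sum]
      refine Finset.sum_congr rfl fun j _ => ?_
      have : (∑ l, D j l * (xbar l i / xs i)) = y (p j) i - y (q j) i := by
        rw [show (fun l => D j l * (xbar l i / xs i)) = fun l => D j l * y l i from rfl] at *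
        exact hDsum j (fun l => y l i)
      rw [this]; ring
    rw [Finset.sum_congr rfl fun k _ => step1 k, Finset.sum_comm]
    refine Finset.sum_congr rfl fun j _ => ?_
    rw [← Finset.mul_sum]
    rw [show (∑ k, D j k * Lg k i) = Lg (p j) i - Lg (q j) i from hDsum j (fun k => Lg k i)]
    ring
  constructor
  · -- forward direction
    intro heq
    -- each equation gives (1/m0 k) * Sd k i + F k i = 0
    have heq' : ∀ k i, (1 / m0 k) * Sd k i + F k i = 0 := by
      intro k i
      have := heq k i
      have h2 : (0:ℝ) = -(1 / m0 k) * Sd k i + (- F k i) := this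
      linarith
    -- total dissipation
    have hQ : (∑ i, ∑ j, m1 j * rr j i xbar *
          ((y (p j) i - y (q j) i) * (Lg (p j) i - Lg (q j) i)))
        + (∑ k, m0 k * ∑ j, κ j * ((γ k (hd j) - γ k (tl j))
            * (Real.exp (γ k (hd j)) - Real.exp (γ k (tl j))))) = 0 := by
      have e1 : ∀ k, ∑ i, m0 k * Lg k i * ((1 / m0 k) * Sd k i + F k i) = 0 := by
        intro k
        refine Finset.sum_eq_zero fun i _ => ?_
        rw [heq' k i]; ring
      have e2 : ∀ k, ∑ i, m0 k * Lg k i * ((1 / m0 k) * Sd k i + F k i)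
          = (∑ i, Lg k i * Sd k i) + m0 k * ∑ i, Lg k i * F k i := by
        intro k
        rw [Finset.mul_sum, ← Finset.sum_add_distrib]
        refine Finset.sum_congr rfl fun i _ => ?_
        field_simp [(hm0 k).ne']
      have e3 : ∑ k, ((∑ i, Lg k i * Sd k i) + m0 k * ∑ i, Lg k i * F k i) = 0 := by
        rw [← Finset.sum_congr rfl fun k _ => e2 k]
        exact Finset.sum_eq_zero fun k _ => e1 k
      rw [Finset.sum_add_distrib] at e3
      rw [Finset.sum_comm] at e3
      rw [Finset.sum_congr rfl fun i (_ : i ∈ Finset.univ) => hdiff i] at e3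
      rw [← e3]
      congr 1
      exact Finset.sum_congr rfl fun k _ => by rw [hchem k]
    -- both parts are sums of nonnegative terms
    have hd_nonneg : ∀ i ∈ Finset.univ, (0:ℝ) ≤ ∑ j, m1 j * rr j i xbar *
        ((y (p j) i - y (q j) i) * (Lg (p j) i - Lg (q j) i)) := by
      intro i _
      refine Finset.sum_nonneg fun j _ => ?_
      have h1 : 0 ≤ (y (p j) i - y (q j) i) * (Lg (p j) i - Lg (q j) i) :=
        aux_log_nonneg (hypos (p j) i) (hypos (q j) i)
      have h2 : 0 < rr j i xbar := lt_of_lt_of_le hα (hrα j i xbar)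
      exact mul_nonneg (mul_nonneg (hm1 j).le h2.le) h1
    have hc_nonneg : ∀ k ∈ Finset.univ, (0:ℝ) ≤ m0 k * ∑ j, κ j * ((γ k (hd j) - γ k (tl j))
        * (Real.exp (γ k (hd j)) - Real.exp (γ k (tl j)))) := by
      intro k _
      have h1 : 0 ≤ ∑ j, κ j * ((γ k (hd j) - γ k (tl j))
          * (Real.exp (γ k (hd j)) - Real.exp (γ k (tl j)))) := by
        refine Finset.sum_nonneg fun j _ => ?_
        exact mul_nonneg (hκ j).le (aux_exp_nonneg _ _)
      exact mul_nonneg (hm0 k).le h1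
    have hA : ∑ i, ∑ j, m1 j * rr j i xbar *
        ((y (p j) i - y (q j) i) * (Lg (p j) i - Lg (q j) i)) = 0 := by
      have hBpart : (0:ℝ) ≤ ∑ k, m0 k * ∑ j, κ j * ((γ k (hd j) - γ k (tl j))
          * (Real.exp (γ k (hd j)) - Real.exp (γ k (tl j)))) :=
        Finset.sum_nonneg hc_nonneg
      have hApart : (0:ℝ) ≤ ∑ i, ∑ j, m1 j * rr j i xbar *
          ((y (p j) i - y (q j) i) * (Lg (p j) i - Lg (q j) i)) :=
        Finset.sum_nonneg hd_nonneg
      linarith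
    have hCzero : ∑ k, m0 k * ∑ j, κ j * ((γ k (hd j) - γ k (tl j))
        * (Real.exp (γ k (hd j)) - Real.exp (γ k (tl j)))) = 0 := by linarith
    -- termwise zero for diffusion
    have hyeq : ∀ j i, y (p j) i = y (q j) i := by
      intro j i
      have h1 := (Finset.sum_eq_zero_iff_of_nonneg hd_nonneg).1 hA i (Finset.mem_univ i)
      have h2 : ∀ j' ∈ Finset.univ, (0:ℝ) ≤ m1 j' * rr j' i xbar *
          ((y (p j') i - y (q j') i) * (Lg (p j') i - Lg (q j') i)) := by
        intro j' _
        have h1 := aux_log_nonneg (hypos (p j') i) (hypos (q j') i)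
        have h2 : 0 < rr j' i xbar := lt_of_lt_of_le hα (hrα j' i xbar)
        exact mul_nonneg (mul_nonneg (hm1 j').le h2.le) h1
      have h3 := (Finset.sum_eq_zero_iff_of_nonneg h2).1 h1 j (Finset.mem_univ j)
      have hpos : 0 < m1 j * rr j i xbar :=
        mul_pos (hm1 j) (lt_of_lt_of_le hα (hrα j i xbar))
      have h4 : (y (p j) i - y (q j) i) * (Lg (p j) i - Lg (q j) i) = 0 := by
        rcases mul_eq_zero.1 h3 with h | h
        · exact absurd h hpos.ne'
        · exact h
      exact aux_log_eq (hypos (p j) i) (hypos (q j) i) h4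
    -- termwise zero for chemistry
    have hγeq : ∀ k j, γ k (hd j) = γ k (tl j) := by
      intro k j
      have h1 := (Finset.sum_eq_zero_iff_of_nonneg hc_nonneg).1 hCzero k (Finset.mem_univ k)
      have h2 : ∑ j, κ j * ((γ k (hd j) - γ k (tl j))
          * (Real.exp (γ k (hd j)) - Real.exp (γ k (tl j)))) = 0 := by
        rcases mul_eq_zero.1 h1 with h | h
        · exact absurd h (hm0 k).ne'
        · exact h
      have h3 : ∀ j' ∈ Finset.univ, (0:ℝ) ≤ κ j' * ((γ k (hd j') - γ k (tl j'))
          * (Real.exp (γ k (hd j')) - Real.exp (γ k (tl j')))) :=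
        fun j' _ => mul_nonneg (hκ j').le (aux_exp_nonneg _ _)
      have h4 := (Finset.sum_eq_zero_iff_of_nonneg h3).1 h2 j (Finset.mem_univ j)
      have h5 : (γ k (hd j) - γ k (tl j))
          * (Real.exp (γ k (hd j)) - Real.exp (γ k (tl j))) = 0 := by
        rcases mul_eq_zero.1 h4 with h | h
        · exact absurd h (hκ j).ne'
        · exact h
      exact aux_exp_eq h5
    constructor
    · -- all compartments equal
      intro k l
      funext i
      have hconst : ∀ k' l', y k' i = y l' i := by
        apply hconn (fun k' => y k' i)
        funext j
        show ∑ l', D j l' * y l' i = 0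
        rw [hDsum j (fun l' => y l' i), hyeq j i, sub_self]
      have := hconst k l
      have hxsne := (hxs i).ne'
      replace this := (div_left_inj' hxsne).1 this
      exact this
    · -- thermodynamic equilibrium
      intro k
      have hBγ : Bᵀ.mulVec (γ k) = 0 := by
        funext j
        show Bᵀ.mulVec (γ k) j = 0
        rw [hBT, hγeq k j, sub_self]
      have hlogdiv : (fun i => Real.log (xbar k i)) - (fun i => Real.log (xs i)) = Lg k := by
        funext i
        show Real.log (xbar k i) - Real.log (xs i) = Real.log (xbar k i / xs i)
        rw [Real.log_div (hxbar k i).ne' (hxs i).ne']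
      have key : (Z * B)ᵀ.mulVec (fun i => Real.log (xbar k i))
          - (Z * B)ᵀ.mulVec (fun i => Real.log (xs i)) = 0 := by
        rw [← Matrix.mulVec_sub, hlogdiv, Matrix.transpose_mul, ← Matrix.mulVec_mulVec]
        rw [show Zᵀ.mulVec (Lg k) = γ k from rfl, hBγ]
      exact sub_eq_zero.1 key
  · -- backward direction
    rintro ⟨huni, hS⟩ k i
    -- diffusion term vanishes
    have hdz : ∀ j, (∑ l, D j l * (xbar l i / xs i)) = 0 := by
      intro j
      have : xbar (p j) i = xbar (q j) i := by rw [huni (p j) (q j)]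
      rw [show (fun l => D j l * (xbar l i / xs i)) = fun l => D j l * y l i from rfl]
      rw [hDsum j (fun l => y l i)]
      rw [hy]
      simp only []
      rw [this, sub_self]
    -- chemistry term vanishes
    have hBγ : Bᵀ.mulVec (γ k) = 0 := by
      have hlogdiv : (fun i => Real.log (xbar k i)) - (fun i => Real.log (xs i)) = Lg k := by
        funext i'
        show Real.log (xbar k i') - Real.log (xs i') = Real.log (xbar k i' / xs i')
        rw [Real.log_div (hxbar k i').ne' (hxs i').ne']
      have key : (Z * B)ᵀ.mulVec (fun i => Real.log (xbar k i))
          - (Z * B)ᵀ.mulVec (fun i => Real.log (xs i)) = 0 := by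
        rw [hS k, sub_self]
      rw [← Matrix.mulVec_sub, hlogdiv, Matrix.transpose_mul, ← Matrix.mulVec_mulVec] at key
      rw [show Zᵀ.mulVec (Lg k) = γ k from rfl] at key
      exact key
    have hγeq : ∀ j, γ k (hd j) = γ k (tl j) := by
      intro j
      have := congrFun hBγ j
      rw [hBT] at this
      have : γ k (hd j) - γ k (tl j) = 0 := this
      linarith
    have hFz : F k i = 0 := by
      rw [hFmv k]
      have : (fun j => κ j * (Real.exp (γ k (hd j)) - Real.exp (γ k (tl j))))
          = (0 : Fin r → ℝ) := by
        funext j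
        rw [hγeq j, sub_self, mul_zero]
        rfl
      rw [this, Matrix.mulVec_zero, Matrix.mulVec_zero]
      rfl
    have hSdz : (∑ j, D j k * m1 j * rr j i xbar * (∑ l, D j l * (xbar l i / xs i))) = 0 :=
      Finset.sum_eq_zero fun j _ => by rw [hdz j, mul_zero]
    rw [hSdz]
    have : (-(Z * B * Matrix.diagonal κ * Bᵀ).mulVec
        (fun ρ => Real.exp (Zᵀ.mulVec (fun i' => Real.log (xbar k i' / xs i')) ρ))) i
        = - F k i := rfl
    rw [this, hFz]
    ring
end
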